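/- Let A be an annihilator nilpotent skew brace. Then the set T₊(A) of elements of finite additive order equals the set T∘(A) of elements of finite multiplicative order. -/

import Mathlib

/-- A skew brace: a type with two group structures `(B,+)` and `(B,∘)`
(the multiplicative group is written with `*`) sharing the same underlying set,
such that `a ∘ (b + c) = a ∘ b - a + a ∘ c`. -/
class SkewBrace (B : Type*) extends AddGroup B, Group B where
  circ_add : ∀ a b c : B, a * (b + c) = a * b - a + a * c

namespace SkewBrace

variable {B : Type*} [SkewBrace B]

/-- `lam a b = -a + a ∘ b`, i.e. `λ_a(b)`. -/
def lam (a b : B) : B := -a + a * b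

/-- `a * b` (the star operation) `= λ_a(b) - b = -a + a ∘ b - b`. -/
def starOp (a b : B) : B := -a + a * b - b

/-- `X * Y` : the additive subgroup generated by all `x * y`, `x ∈ X`, `y ∈ Y`,
regarded as a set. -/
def starSpan (X Y : Set B) : Set B :=
  (AddSubgroup.closure {z : B | ∃ x ∈ X, ∃ y ∈ Y, z = starOp x y} : AddSubgroup B)

/-- `[X,Y]₊` : the additive subgroup generated by all additive commutators
`x + y - x - y`, `x ∈ X`, `y ∈ Y`, regarded as a set. -/
def addCommSpan (X Y : Set B) : Set B :=
  (AddSubgroup.closure {z : B | ∃ x ∈ X, ∃ y ∈ Y, z = x + y - x - y} : AddSubgroup B)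

/-- A sub skew brace: a subset containing `0` and closed under both group
operations and both inverses. -/
def IsSubSkewBrace (S : Set B) : Prop :=
  0 ∈ S ∧ (∀ a ∈ S, ∀ b ∈ S, a + b ∈ S) ∧ (∀ a ∈ S, -a ∈ S) ∧
    (∀ a ∈ S, ∀ b ∈ S, a * b ∈ S) ∧ (∀ a ∈ S, a⁻¹ ∈ S)

/-- An ideal: a sub skew brace that is normal in `(B,+)` and in `(B,∘)` and
invariant under all `λ_a`. -/
def IsIdeal (S : Set B) : Prop :=
  IsSubSkewBrace S ∧ (∀ a : B, ∀ i ∈ S, a + i - a ∈ S) ∧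
    (∀ a : B, ∀ i ∈ S, a * i * a⁻¹ ∈ S) ∧ (∀ a : B, ∀ i ∈ S, lam a i ∈ S)

/-- The annihilator `Ann(B) = {x | x∘a = a∘x = x+a = a+x for all a}`. -/
def annSet (B : Type*) [SkewBrace B] : Set B :=
  {x | ∀ a : B, x * a = a * x ∧ x * a = x + a ∧ x + a = a + x}

/-- The annihilator series: `Ann₀(B) = 0` and `Ann_{n+1}(B)` is the preimage of
`Ann(B/Annₙ(B))` under the quotient map; membership is expressed via coset
equalities modulo `Annₙ(B)`. -/
def annSeries (B : Type*) [SkewBrace B] : ℕ → Set B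
  | 0 => {0}
  | n + 1 => {x | ∀ a : B,
      x * a - a * x ∈ annSeries B n ∧
      x * a - (x + a) ∈ annSeries B n ∧
      (x + a) - (a + x) ∈ annSeries B n}

/-- `B` is annihilator nilpotent if `Annₙ(B) = B` for some `n`. -/
def AnnNilpotent (B : Type*) [SkewBrace B] : Prop :=
  ∃ n : ℕ, annSeries B n = Set.univ

/-- `leftPow B n` is `B^{n+1}`: `B¹ = B`, `B^{n+1} = B * Bⁿ`. -/
def leftPow (B : Type*) [SkewBrace B] : ℕ → Set B
  | 0 => Set.univ
  | n + 1 => starSpan Set.univ (leftPow B n)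

/-- `rightPow B n` is `B⁽ⁿ⁺¹⁾`: `B⁽¹⁾ = B`, `B⁽ⁿ⁺¹⁾ = B⁽ⁿ⁾ * B`. -/
def rightPow (B : Type*) [SkewBrace B] : ℕ → Set B
  | 0 => Set.univ
  | n + 1 => starSpan (rightPow B n) Set.univ

/-- `B` is left nilpotent if `Bⁿ = 0` for some `n ≥ 1`. -/
def LeftNilpotent (B : Type*) [SkewBrace B] : Prop :=
  ∃ n : ℕ, leftPow B n = ({0} : Set B)

/-- `B` is right nilpotent if `B⁽ⁿ⁾ = 0` for some `n ≥ 1`. -/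
def RightNilpotent (B : Type*) [SkewBrace B] : Prop :=
  ∃ n : ℕ, rightPow B n = ({0} : Set B)

/-- `strongPow B n` is `B^[n+1]`: `B^[1] = B`, and `B^[n+1]` is the additive
subgroup generated by `⋃_{i=1}^{n} B^[i] * B^[n+1-i]`. -/
def strongPow (B : Type*) [SkewBrace B] : ℕ → Set B
  | 0 => Set.univ
  | n + 1 => (AddSubgroup.closure (⋃ j : Fin (n + 1),
      {z : B | ∃ x ∈ strongPow B j.1, ∃ y ∈ strongPow B (n - j.1), z = starOp x y}) :
        AddSubgroup B)
  decreasing_by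
  · exact j.isLt
  · omega

/-- `B` is strongly nilpotent if `B^[n] = 0` for some `n ≥ 1`. -/
def StronglyNilpotent (B : Type*) [SkewBrace B] : Prop :=
  ∃ n : ℕ, strongPow B n = ({0} : Set B)

/-- `gammaAux B n` is `Γ_[n+1](B)`: `Γ_[1](B) = B` and, for `n ≥ 2`, `Γ_[n](B)` is
the additive subgroup generated by the sets `Γ_[i](B) * Γ_[n-i](B)` and
`[Γ_[i](B), Γ_[n-i](B)]₊` for `1 ≤ i ≤ n-1`. -/
def gammaAux (B : Type*) [SkewBrace B] : ℕ → Set B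
  | 0 => Set.univ
  | n + 1 => (AddSubgroup.closure (⋃ j : Fin (n + 1),
      {z : B | ∃ x ∈ gammaAux B j.1, ∃ y ∈ gammaAux B (n - j.1),
        z = starOp x y ∨ z = x + y - x - y}) : AddSubgroup B)
  decreasing_by
  · exact j.isLt
  · omega

/-- `Γ_[n](B)` for `n ≥ 1` (one-based indexing as in the paper). -/
def gammaBr (B : Type*) [SkewBrace B] (n : ℕ) : Set B := gammaAux B (n - 1)

/-- `B` is finitely generated as a skew brace: there is a finite subset whose
smallest containing sub skew brace is `B` itself. -/
def SBFinitelyGenerated (B : Type*) [SkewBrace B] : Prop :=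
  ∃ S : Set B, S.Finite ∧ ∀ T : Set B, IsSubSkewBrace T → S ⊆ T → T = Set.univ

/-- `B` satisfies the ascending chain condition on sub skew braces. -/
def ACCSubSkewBrace (B : Type*) [SkewBrace B] : Prop :=
  ∀ f : ℕ → Set B, (∀ n, IsSubSkewBrace (f n)) → (∀ n, f n ⊆ f (n + 1)) →
    ∃ N : ℕ, ∀ n, N ≤ n → f n = f N



universe u

open Subgroup
open scoped commutatorElement

theorem SBaux.lcs_map_eq {G : Type u} {H : Type*} [Group G] [Group H] (f : G →* H)
    (hf : Function.Surjective f) (n : ℕ) :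
    Subgroup.map f ((⊤ : Subgroup (G)).lowerCentralSeries n) = (⊤ : Subgroup (H)).lowerCentralSeries n := by
  induction n with
  | zero => simpa using Subgroup.map_top_of_surjective f hf
  | succ n ih =>
    show Subgroup.map f ⁅(⊤ : Subgroup (G)).lowerCentralSeries n, ⊤⁆ = ⁅(⊤ : Subgroup (H)).lowerCentralSeries n, ⊤⁆
    rw [Subgroup.map_commutator, ih, Subgroup.map_top_of_surjective f hf]

theorem SBaux.gl2 : ∀ (c : ℕ) (G : Type u) (_ : Group G)
    (_ : (⊤ : Subgroup (G)).lowerCentralSeries c = ⊥)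
    (n : ℕ) (_ : 0 < n) (X : Set G) (_ : Subgroup.closure X = ⊤)
    (_ : ∀ x ∈ X, x ^ n ∈ Subgroup.center G),
    ∀ u ∈ ⁅(⊤ : Subgroup G), (⊤ : Subgroup G)⁆, IsOfFinOrder u := by
  intro c
  induction c with
  | zero =>
    intro G _ hc n hn X hX hcen u hu
    have h1 : u ∈ (⊥ : Subgroup G) := by
      rw [← hc]; exact mem_top u
    rw [Subgroup.mem_bot] at h1
    rw [h1]; exact IsOfFinOrder.one
  | succ c ih =>
    intro G _ hc n hn X hX hcen u hu
    match c, ih with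
    | 0, _ =>
      have h1 : u ∈ (⊥ : Subgroup G) := by rw [← hc]; exact hu
      rw [Subgroup.mem_bot] at h1
      rw [h1]; exact IsOfFinOrder.one
    | d + 1, ih =>
      set c := d + 1 with hcdef
      -- elements of lcs G c commute with everything
      have hZcomm : ∀ z ∈ (⊤ : Subgroup (G)).lowerCentralSeries c, ∀ g : G, Commute z g := by
        intro z hz g
        have h2 : ⁅z, g⁆ ∈ (⊤ : Subgroup (G)).lowerCentralSeries (c + 1) :=
          commutator_mem_commutator hz (mem_top g)
        rw [hc] at h2
        exact commutatorElement_eq_one_iff_commute.mp (Subgroup.mem_bot.mp h2)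
      -- the subgroup generated by central n-torsion elements
      set T' : Set G := {z : G | (∀ g : G, Commute z g) ∧ z ^ n = 1} with hT'
      have hW : ∀ w ∈ Subgroup.closure T', (∀ g : G, Commute w g) ∧ w ^ n = 1 := by
        intro w hw
        induction hw using Subgroup.closure_induction with
        | mem x hx => exact hx
        | one => exact ⟨fun g => Commute.one_left g, one_pow n⟩
        | mul a b _ _ iha ihb =>
          refine ⟨fun g => Commute.mul_left (iha.1 g) (ihb.1 g), ?_⟩
          rw [Commute.mul_pow (iha.1 b), iha.2, ihb.2, one_mul]
        | inv a _ iha =>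
          exact ⟨fun g => Commute.inv_left (iha.1 g), by rw [inv_pow, iha.2, inv_one]⟩
      -- lcs G c is contained in that subgroup
      have hZW : (⊤ : Subgroup (G)).lowerCentralSeries c ≤ Subgroup.closure T' := by
        show ⁅(⊤ : Subgroup (G)).lowerCentralSeries d, ⊤⁆ ≤ Subgroup.closure T'
        rw [Subgroup.commutator_le]
        intro k hk g _
        have hcent : ∀ h : G, ∀ g' : G, Commute ⁅k, h⁆ g' := by
          intro h g'
          exact hZcomm _ (commutator_mem_commutator hk (mem_top h)) g'
        have hFmul : ∀ a b : G, ⁅k, a * b⁆ = ⁅k, a⁆ * ⁅k, b⁆ := by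
          intro a b
          have h1 : ⁅k, a * b⁆ = ⁅k, a⁆ * (a * ⁅k, b⁆ * a⁻¹) := by group
          rw [h1, ((hcent b a).symm.eq), mul_assoc, mul_inv_cancel, mul_one]
        set F : G →* G := MonoidHom.mk' (fun h => ⁅k, h⁆) hFmul with hF
        have hgmem : F g ∈ Subgroup.map F (Subgroup.closure X) := by
          refine Subgroup.mem_map_of_mem F ?_
          rw [hX]; exact mem_top g
        rw [MonoidHom.map_closure] at hgmem
        have himg : F '' X ⊆ T' := by
          rintro _ ⟨x, hx, rfl⟩
          constructor
          · exact hcent x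
        
          · rw [← map_pow]
            show ⁅k, x ^ n⁆ = 1
            exact commutatorElement_eq_one_iff_commute.mpr
              (Subgroup.mem_center_iff.mp (hcen x hx) k)
        exact Subgroup.closure_mono himg (by exact hgmem)
      -- quotient by lcs G c
      set Z := (⊤ : Subgroup (G)).lowerCentralSeries c with hZ
      have hsurj : Function.Surjective (QuotientGroup.mk' Z) := QuotientGroup.mk'_surjective Z
      have hlcsQ : (⊤ : Subgroup (G ⧸ Z)).lowerCentralSeries c = ⊥ := by
        rw [← SBaux.lcs_map_eq (QuotientGroup.mk' Z) hsurj c]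
        rw [Subgroup.map_eq_bot_iff, QuotientGroup.ker_mk']
      have hres := ih (G ⧸ Z) inferInstance hlcsQ n hn ((QuotientGroup.mk' Z) '' X)
        (by rw [← MonoidHom.map_closure, hX, Subgroup.map_top_of_surjective _ hsurj])
        (by
          rintro _ ⟨x, hx, rfl⟩
          rw [← map_pow]
          rw [Subgroup.mem_center_iff]
          intro q
          obtain ⟨g, rfl⟩ := hsurj q
          rw [← map_mul, ← map_mul, Subgroup.mem_center_iff.mp (hcen x hx) g])
        ((QuotientGroup.mk' Z) u)
        (by
          have : (QuotientGroup.mk' Z) u ∈ Subgroup.map (QuotientGroup.mk' Z) ⁅(⊤ : Subgroup G), ⊤⁆ :=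
            Subgroup.mem_map_of_mem _ hu
          rwa [Subgroup.map_commutator, Subgroup.map_top_of_surjective _ hsurj] at this)
      obtain ⟨M, hM, hMu⟩ := isOfFinOrder_iff_pow_eq_one.mp hres
      rw [← map_pow] at hMu
      have huM : u ^ M ∈ Z := by
        have : u ^ M ∈ (QuotientGroup.mk' Z).ker := hMu
        rwa [QuotientGroup.ker_mk'] at this
      have := (hW _ (hZW huM)).2
      rw [← pow_mul] at this
      exact isOfFinOrder_iff_pow_eq_one.mpr ⟨M * n, Nat.mul_pos hM hn, this⟩

theorem SBaux.lcs_subgroup_bot {G : Type u} [Group G] {c : ℕ}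
    (hc : (⊤ : Subgroup (G)).lowerCentralSeries c = ⊥) (H : Subgroup G) :
    (⊤ : Subgroup (H)).lowerCentralSeries c = ⊥ := by
  have h1 := Subgroup.lowerCentralSeries_map_subtype_le H c
  rw [hc, le_bot_iff] at h1
  have h2 := (Subgroup.map_eq_bot_iff _).mp h1
  rw [Subgroup.ker_subtype] at h2
  exact le_bot_iff.mp h2

theorem SBaux.list_pow_prod {M : Type*} [CommMonoid M] (l : List M) (n : ℕ) :
    (l.map (· ^ n)).prod = l.prod ^ n := by
  induction l with
  | nil => simp
  | cons a t ih => simp [mul_pow, ih]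

theorem SBaux.cor1 {G : Type u} [Group G] {c : ℕ} (hc : (⊤ : Subgroup (G)).lowerCentralSeries c = ⊥)
    {n : ℕ} (hn : 0 < n) (X : Set G) (hX : ∀ x ∈ X, x ^ n = 1) :
    ∀ u ∈ Subgroup.closure X, IsOfFinOrder u := by
  intro u hu
  set H := Subgroup.closure X with hH
  set X' : Set H := (H.subtype) ⁻¹' X with hX'
  have hcl : Subgroup.closure X' = ⊤ := Subgroup.closure_preimage_eq_top X
  have hXn : ∀ x ∈ X', x ^ n = 1 := by
    intro x hx
    apply Subtype.ext
    rw [Subgroup.coe_pow, Subgroup.coe_one]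
    exact hX _ hx
  have hfin : ∀ v ∈ ⁅(⊤ : Subgroup H), ⊤⁆, IsOfFinOrder v :=
    SBaux.gl2 c H inferInstance (SBaux.lcs_subgroup_bot hc H) n hn X' hcl
      (fun x hx => by rw [hXn x hx]; exact Subgroup.one_mem _)
  have hab : ∀ v ∈ Subgroup.closure X', (Abelianization.of v) ^ n = 1 := by
    intro v hv
    induction hv using Subgroup.closure_induction with
    | mem x hx => rw [← map_pow, hXn x hx, map_one]
    | one => rw [map_one, one_pow]
    | mul a b _ _ iha ihb => rw [map_mul, mul_pow, iha, ihb, one_mul]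
    | inv a _ iha => rw [map_inv, inv_pow, iha, inv_one]
  set u' : H := ⟨u, hu⟩ with hu'
  have h2 : u' ^ n ∈ _root_.commutator H := by
    have h3 : Abelianization.of (u' ^ n) = 1 := by
      rw [map_pow]
      exact hab u' (by rw [hcl]; exact Subgroup.mem_top u')
    exact (QuotientGroup.eq_one_iff _).mp h3
  obtain ⟨M, hM, hMe⟩ := isOfFinOrder_iff_pow_eq_one.mp (hfin _ h2)
  refine isOfFinOrder_iff_pow_eq_one.mpr ⟨n * M, Nat.mul_pos hn hM, ?_⟩
  have h4 : (u' ^ (n * M)) = 1 := by rw [pow_mul]; exact hMe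
  have h5 := congrArg (Subtype.val) h4
  rw [Subgroup.coe_pow] at h5
  exact h5

theorem SBaux.cor2 {G : Type u} [Group G] {c : ℕ} (hc : (⊤ : Subgroup (G)).lowerCentralSeries c = ⊥)
    {n : ℕ} (hn : 0 < n) (X : Set G) (w : G) (hw : ∀ x ∈ X, x ^ n = w)
    (hwc : ∀ g : G, Commute w g)
    (l : List G) (hl : ∀ a ∈ l, a ∈ X) (hne : l ≠ []) (hprod : l.prod = 1) :
    IsOfFinOrder w := by
  set H := Subgroup.closure X with hH
  obtain ⟨x0, hx0⟩ : ∃ x, x ∈ l := List.exists_mem_of_ne_nil l hne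
  have hwH : w ∈ H := by
    rw [← hw x0 (hl x0 hx0)]
    exact pow_mem (Subgroup.subset_closure (hl x0 hx0)) n
  set X' : Set H := (H.subtype) ⁻¹' X with hX'
  have hcl : Subgroup.closure X' = ⊤ := Subgroup.closure_preimage_eq_top X
  set w' : H := ⟨w, hwH⟩ with hw'
  have hXn : ∀ x ∈ X', x ^ n = w' := by
    intro x hx
    apply Subtype.ext
    rw [Subgroup.coe_pow]
    exact hw _ hx
  have hfin : ∀ v ∈ ⁅(⊤ : Subgroup H), ⊤⁆, IsOfFinOrder v :=
    SBaux.gl2 c H inferInstance (SBaux.lcs_subgroup_bot hc H) n hn X' hcl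
      (fun x hx => by
        rw [hXn x hx]
        exact Subgroup.mem_center_iff.mpr (fun g => Subtype.ext ((hwc (g : G)).symm.eq)))
  set l' : List H := l.attach.map (fun a => ⟨a.1, Subgroup.subset_closure (hl a.1 a.2)⟩) with hl'
  have hl'coe : l'.map (H.subtype) = l := by
    rw [hl', List.map_map]
    have h0 := List.attach_map_val (l := l) (f := fun x => x)
    rw [List.map_id'] at h0
    exact h0
  have hl'len : l'.length = l.length := by rw [hl', List.length_map, List.length_attach]
  have hl'prod : l'.prod = 1 := by
    apply Subtype.ext
    have := congrArg List.prod hl'coe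
    rw [← MonoidHom.map_list_prod] at this
    rw [hprod] at this
    exact this
  have hmem : ∀ a ∈ l', a ∈ X' := by
    rw [hl']
    rintro a ha
    rw [List.mem_map] at ha
    obtain ⟨b, hb, rfl⟩ := ha
    exact hl b.1 b.2
  -- abelianization computation
  have hconstlist : (l'.map (Abelianization.of)).map (· ^ n)
      = List.replicate l.length (Abelianization.of w') := by
    apply List.eq_replicate_iff.mpr
    constructor
    · rw [List.length_map, List.length_map, hl'len]
    · intro b hb
      rw [List.mem_map] at hb
      obtain ⟨b1, hb1, rfl⟩ := hb
      rw [List.mem_map] at hb1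
      obtain ⟨a, ha, rfl⟩ := hb1
      rw [← map_pow, hXn a (hmem a ha)]
  have hcalc : (Abelianization.of w') ^ l.length = 1 := by
    have h1 := congrArg List.prod hconstlist
    rw [List.prod_replicate, SBaux.list_pow_prod, ← MonoidHom.map_list_prod, hl'prod, map_one,
      one_pow] at h1
    exact h1.symm
  have h2 : w' ^ l.length ∈ _root_.commutator H := by
    have h6 : Abelianization.of (w' ^ l.length) = 1 := by rw [map_pow]; exact hcalc
    exact (QuotientGroup.eq_one_iff _).mp h6
  obtain ⟨M, hM, hMe⟩ := isOfFinOrder_iff_pow_eq_one.mp (hfin _ h2)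
  refine isOfFinOrder_iff_pow_eq_one.mpr ⟨l.length * M, Nat.mul_pos (List.length_pos_iff.mpr hne) hM, ?_⟩
  have h4 : (w' ^ (l.length * M)) = 1 := by rw [pow_mul]; exact hMe
  have h5 := congrArg (Subtype.val) h4
  rw [Subgroup.coe_pow] at h5
  exact h5

section SBmain



variable {B : Type u} [SkewBrace B]

theorem mul_zero' (a : B) : a * 0 = a := by
  have h := circ_add a 0 0
  rw [add_zero] at h
  have h2 : (0 : B) + a * 0 = (a * 0 - a) + a * 0 := by rw [zero_add]; exact h
  have h3 := add_right_cancel h2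
  exact (sub_eq_zero.mp h3.symm)

theorem one_eq_zero : (1 : B) = 0 := by
  have h := circ_add (1 : B) 0 0
  simp only [one_mul, add_zero, zero_sub] at h
  exact neg_eq_zero.mp h.symm

theorem lam_add (a b c : B) : lam a (b + c) = lam a b + lam a c := by
  simp only [lam, circ_add, sub_eq_add_neg, add_assoc]

/-- `lam a` as an additive monoid hom. -/
def lamHom (a : B) : B →+ B := AddMonoidHom.mk' (lam a) (lam_add a)

theorem lam_zero (a : B) : lam a 0 = 0 := by
  rw [lam, mul_zero', neg_add_cancel]

theorem lam_nsmul (a : B) (n : ℕ) (b : B) : lam a (n • b) = n • lam a b :=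
  map_nsmul (lamHom a) n b

theorem mul_eq_add_lam (a b : B) : a * b = a + lam a b := by
  rw [lam, add_neg_cancel_left]

-- annSet lemmas
theorem annSet.mul_eq_add {z : B} (h : z ∈ annSet B) (a : B) : z * a = z + a := (h a).2.1

theorem annSet.comm {z : B} (h : z ∈ annSet B) (a : B) : z + a = a + z := (h a).2.2

theorem annSet.mul_comm {z : B} (h : z ∈ annSet B) (a : B) : z * a = a * z := (h a).1

theorem annSet.mul_eq_add' {z : B} (h : z ∈ annSet B) (a : B) : a * z = a + z := by
  rw [← annSet.mul_comm h, annSet.mul_eq_add h, annSet.comm h]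

theorem annSet.lam_fix {z : B} (h : z ∈ annSet B) (a : B) : lam a z = z := by
  rw [lam, annSet.mul_eq_add' h, neg_add_cancel_left]

theorem annSet.zero_mem : (0 : B) ∈ annSet B := by
  intro a
  have h1 : (0 : B) * a = a := by rw [← one_eq_zero, one_mul]
  refine ⟨?_, ?_, ?_⟩
  · rw [h1, mul_zero']
  · rw [h1, zero_add]
  · rw [zero_add, add_zero]

theorem annSet.add_mem {z w : B} (hz : z ∈ annSet B) (hw : w ∈ annSet B) :
    z + w ∈ annSet B := by
  intro a
  have hzw : z * w = z + w := annSet.mul_eq_add hz w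
  have h1 : (z + w) * a = z + (w + a) := by
    rw [← hzw, mul_assoc, annSet.mul_eq_add hz, annSet.mul_eq_add hw]
  have hcomm : (z + w) + a = a + (z + w) := by
    rw [add_assoc, annSet.comm hw, ← add_assoc, annSet.comm hz, add_assoc, ← add_assoc]
  have h2 : a * (z + w) = a + (z + w) := by
    rw [← hzw, ← mul_assoc, annSet.mul_eq_add' hw, annSet.mul_eq_add' hz, hzw, add_assoc]
  refine ⟨?_, ?_, hcomm⟩
  · rw [h1, h2, ← add_assoc]
    exact hcomm
  · rw [h1, add_assoc]

theorem annSet.neg_mem {z : B} (hz : z ∈ annSet B) : -z ∈ annSet B := by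
  have hz1 : z * -z = 1 := by rw [annSet.mul_eq_add hz, add_neg_cancel, one_eq_zero]
  have h1 : ∀ b : B, -z * b = -z + b := by
    intro b
    apply mul_left_cancel (a := z)
    rw [← mul_assoc, hz1, one_mul, annSet.mul_eq_add hz, ← add_assoc, add_neg_cancel, zero_add]
  have hz2 : -z * z = 1 := by rw [h1 z, neg_add_cancel, one_eq_zero]
  have hcen : ∀ b : B, -z + b = b + -z := by
    intro b
    calc -z + b = -z + b + z + -z := by
          rw [add_assoc (-z + b) z, add_neg_cancel, add_zero]
    _ = -z + (b + z) + -z := by rw [add_assoc (-z) b z]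
    _ = -z + (z + b) + -z := by rw [← annSet.comm hz b]
    _ = b + -z := by rw [← add_assoc (-z) z b, neg_add_cancel, zero_add]
  have h2 : ∀ b : B, b * -z = b + -z := by
    intro b
    apply mul_right_cancel (b := z)
    rw [mul_assoc, hz2, mul_one, annSet.mul_eq_add' hz, add_assoc, neg_add_cancel, add_zero]
  intro a
  exact ⟨by rw [h1, h2, hcen], h1 a, hcen a⟩

/-- The annihilator as an additive subgroup. -/
def annAdd (B : Type u) [SkewBrace B] : AddSubgroup B where
  carrier := annSet B
  zero_mem' := annSet.zero_mem
  add_mem' := annSet.add_mem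
  neg_mem' := annSet.neg_mem

instance annAdd_normal : (annAdd B).Normal := by
  constructor
  intro z hz g
  have h : g + z + -g = z := by
    rw [add_assoc, annSet.comm hz, ← add_assoc, add_neg_cancel, zero_add]
  show g + z + -g ∈ annAdd B
  rw [h]
  exact hz


end SBmain

section SBquot



variable {B : Type u} [SkewBrace B]

/-- Quotient of a skew brace by its annihilator. -/
abbrev AnnQuot (B : Type u) [SkewBrace B] := B ⧸ annAdd B

theorem quot_mul_well_defined (x y x' y' : B) (hx : -x + x' ∈ annAdd B)
    (hy : -y + y' ∈ annAdd B) : -(x * y) + x' * y' ∈ annAdd B := by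
  obtain ⟨i, hik, hxi⟩ : ∃ i, i ∈ annSet B ∧ x' = x + i :=
    ⟨-x + x', hx, (add_neg_cancel_left x x').symm⟩
  obtain ⟨j, hjk, hyj⟩ : ∃ j, j ∈ annSet B ∧ y' = y + j :=
    ⟨-y + y', hy, (add_neg_cancel_left y y').symm⟩
  have h1 : x' * y' = i + (x * y + j) := by
    rw [hxi, hyj]
    have e1 : x + i = i * x := by rw [annSet.mul_eq_add hik, annSet.comm hik]
    have e2 : y + j = y * j := by rw [annSet.mul_eq_add' hjk]
    rw [e1, e2, mul_assoc, ← mul_assoc x y j, annSet.mul_eq_add' hjk (x * y),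
      annSet.mul_eq_add hik]
  have h2 : -(x * y) + x' * y' = j + i := by
    rw [h1, annSet.comm hik (x * y + j), ← add_assoc, ← add_assoc, neg_add_cancel, zero_add]
  show -(x * y) + x' * y' ∈ annSet B
  rw [h2]
  exact annSet.add_mem hjk hik

theorem quot_inv_well_defined (x x' : B) (hx : -x + x' ∈ annAdd B) :
    -(x⁻¹) + x'⁻¹ ∈ annAdd B := by
  obtain ⟨i, hik, hxi⟩ : ∃ i, i ∈ annSet B ∧ x' = x + i :=
    ⟨-x + x', hx, (add_neg_cancel_left x x').symm⟩
  have hne : -i ∈ annSet B := annSet.neg_mem hik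
  have hiinv : i⁻¹ = -i := by
    apply inv_eq_of_mul_eq_one_right
    rw [annSet.mul_eq_add hik, add_neg_cancel, one_eq_zero]
  have h1 : x' = i * x := by rw [hxi, annSet.mul_eq_add hik, annSet.comm hik]
  have h2 : x'⁻¹ = x⁻¹ + -i := by
    rw [h1, mul_inv_rev, hiinv, annSet.mul_eq_add' hne]
  show -(x⁻¹) + x'⁻¹ ∈ annSet B
  rw [h2, ← add_assoc, neg_add_cancel, zero_add]
  exact hne

instance annQuotMul : Mul (AnnQuot B) :=
  ⟨Quotient.map₂' (· * ·) (by
    intro x x' hx y y' hy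
    rw [QuotientAddGroup.leftRel_apply] at hx hy ⊢
    exact quot_mul_well_defined x y x' y' hx hy)⟩

instance annQuotInv : Inv (AnnQuot B) :=
  ⟨Quotient.map' (·⁻¹) (by
    intro x x' hx
    rw [QuotientAddGroup.leftRel_apply] at hx ⊢
    exact quot_inv_well_defined x x' hx)⟩

theorem quot_mk_mul (x y : B) :
    (QuotientAddGroup.mk (x * y) : AnnQuot B)
      = QuotientAddGroup.mk x * QuotientAddGroup.mk y := rfl

theorem quot_mk_inv (x : B) :
    (QuotientAddGroup.mk (x⁻¹) : AnnQuot B) = (QuotientAddGroup.mk x : AnnQuot B)⁻¹ := rfl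

instance annQuotGroup : Group (AnnQuot B) where
  mul := (· * ·)
  one := QuotientAddGroup.mk 1
  inv := (·⁻¹)
  mul_assoc := by
    rintro ⟨a⟩ ⟨b⟩ ⟨c⟩
    show QuotientAddGroup.mk (a * b * c) = QuotientAddGroup.mk (a * (b * c))
    rw [mul_assoc]
  one_mul := by
    rintro ⟨a⟩
    show QuotientAddGroup.mk (1 * a) = QuotientAddGroup.mk a
    rw [one_mul]
  mul_one := by
    rintro ⟨a⟩
    show QuotientAddGroup.mk (a * 1) = QuotientAddGroup.mk a
    rw [mul_one]
  inv_mul_cancel := by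
    rintro ⟨a⟩
    show QuotientAddGroup.mk (a⁻¹ * a) = QuotientAddGroup.mk 1
    rw [inv_mul_cancel]

instance annQuotBrace : SkewBrace (AnnQuot B) :=
  { (inferInstance : AddGroup (AnnQuot B)), (inferInstance : Group (AnnQuot B)) with
    circ_add := by
      rintro ⟨a⟩ ⟨b⟩ ⟨c⟩
      show QuotientAddGroup.mk (a * (b + c))
        = QuotientAddGroup.mk (a * b) - QuotientAddGroup.mk a + QuotientAddGroup.mk (a * c)
      rw [← QuotientAddGroup.mk_sub, ← QuotientAddGroup.mk_add, circ_add] }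


end SBquot

section SBser



variable {B : Type u} [SkewBrace B]

theorem quot_mk_surjective :
    Function.Surjective (fun x : B => (QuotientAddGroup.mk x : AnnQuot B)) := by
  rintro ⟨a⟩
  exact ⟨a, rfl⟩

theorem quot_mk_eq_zero_iff (x : B) :
    (QuotientAddGroup.mk x : AnnQuot B) = 0 ↔ x ∈ annSet B :=
  QuotientAddGroup.eq_zero_iff x

theorem quot_one_def : (1 : AnnQuot B) = QuotientAddGroup.mk 1 := rfl

theorem quot_mk_pow (x : B) (n : ℕ) :
    (QuotientAddGroup.mk (x ^ n) : AnnQuot B) = (QuotientAddGroup.mk x : AnnQuot B) ^ n := by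
  induction n with
  | zero => rw [pow_zero, pow_zero, quot_one_def]
  | succ n ih => rw [pow_succ, pow_succ, quot_mk_mul, ih]

theorem quot_mk_nsmul (x : B) (n : ℕ) :
    (QuotientAddGroup.mk (n • x) : AnnQuot B) = n • (QuotientAddGroup.mk x : AnnQuot B) := by
  induction n with
  | zero => rw [zero_nsmul, zero_nsmul]; rfl
  | succ n ih => rw [succ_nsmul, succ_nsmul, QuotientAddGroup.mk_add, ih]

theorem mem_annSeries_succ_iff {C : Type*} [SkewBrace C] (x : C) (n : ℕ) :
    x ∈ annSeries C (n + 1) ↔ ∀ a : C,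
      x * a - a * x ∈ annSeries C n ∧
      x * a - (x + a) ∈ annSeries C n ∧
      (x + a) - (a + x) ∈ annSeries C n := Iff.rfl

theorem mem_annSeries_zero_iff {C : Type*} [SkewBrace C] (x : C) :
    x ∈ annSeries C 0 ↔ x = 0 := Iff.rfl

theorem quot_annSeries : ∀ (n : ℕ) (x : B),
    x ∈ annSeries B (n + 1) ↔
      (QuotientAddGroup.mk x : AnnQuot B) ∈ annSeries (AnnQuot B) n := by
  intro n
  induction n with
  | zero =>
    intro x
    rw [mem_annSeries_succ_iff]
    show _ ↔ (QuotientAddGroup.mk x : AnnQuot B) ∈ ({0} : Set (AnnQuot B))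
    rw [Set.mem_singleton_iff, quot_mk_eq_zero_iff]
    constructor
    · intro h a
      obtain ⟨h1, h2, h3⟩ := h a
      rw [mem_annSeries_zero_iff, sub_eq_zero] at h1 h2 h3
      exact ⟨h1, h2, h3⟩
    · intro h a
      obtain ⟨h1, h2, h3⟩ := h a
      refine ⟨?_, ?_, ?_⟩ <;> rw [mem_annSeries_zero_iff, sub_eq_zero] <;> assumption
  | succ n ih =>
    intro x
    rw [mem_annSeries_succ_iff, mem_annSeries_succ_iff]
    constructor
    · intro h q
      obtain ⟨a, rfl⟩ := quot_mk_surjective q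
      obtain ⟨h1, h2, h3⟩ := h a
      refine ⟨?_, ?_, ?_⟩
      · rw [← quot_mk_mul, ← quot_mk_mul, ← QuotientAddGroup.mk_sub]
        exact (ih _).mp h1
      · rw [← quot_mk_mul, ← QuotientAddGroup.mk_add, ← QuotientAddGroup.mk_sub]
        exact (ih _).mp h2
      · rw [← QuotientAddGroup.mk_add, ← QuotientAddGroup.mk_add, ← QuotientAddGroup.mk_sub]
        exact (ih _).mp h3
    · intro h a
      obtain ⟨h1, h2, h3⟩ := h (QuotientAddGroup.mk a)
      rw [← quot_mk_mul, ← quot_mk_mul, ← QuotientAddGroup.mk_sub] at h1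
      rw [← quot_mk_mul, ← QuotientAddGroup.mk_add, ← QuotientAddGroup.mk_sub] at h2
      rw [← QuotientAddGroup.mk_add, ← QuotientAddGroup.mk_add, ← QuotientAddGroup.mk_sub] at h3
      exact ⟨(ih _).mpr h1, (ih _).mpr h2, (ih _).mpr h3⟩

theorem annSeries_subgroup : ∀ (n : ℕ) (B : Type u) [SkewBrace B],
    (0 : B) ∈ annSeries B n ∧
      (∀ x y : B, x ∈ annSeries B n → y ∈ annSeries B n → x + y ∈ annSeries B n) ∧
      (∀ x : B, x ∈ annSeries B n → -x ∈ annSeries B n) := by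
  intro n
  induction n with
  | zero =>
    intro B _
    refine ⟨rfl, ?_, ?_⟩
    · intro x y hx hy
      rw [mem_annSeries_zero_iff] at hx hy ⊢
      rw [hx, hy, add_zero]
    · intro x hx
      rw [mem_annSeries_zero_iff] at hx ⊢
      rw [hx, neg_zero]
  | succ n ih =>
    intro B _
    obtain ⟨h0, hadd, hneg⟩ := ih (AnnQuot B)
    refine ⟨?_, ?_, ?_⟩
    · rw [quot_annSeries]
      rw [QuotientAddGroup.mk_zero]
      exact h0
    · intro x y hx hy
      rw [quot_annSeries] at hx hy ⊢
      rw [QuotientAddGroup.mk_add]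
      exact hadd _ _ hx hy
    · intro x hx
      rw [quot_annSeries] at hx ⊢
      rw [QuotientAddGroup.mk_neg]
      exact hneg _ hx

/-- `annSeries B n` as a subgroup of `Multiplicative B`. -/
def annSeriesSub (B : Type u) [SkewBrace B] (n : ℕ) : Subgroup (Multiplicative B) where
  carrier := {u | Multiplicative.toAdd u ∈ annSeries B n}
  one_mem' := (annSeries_subgroup n B).1
  mul_mem' := fun hx hy => (annSeries_subgroup n B).2.1 _ _ hx hy
  inv_mem' := fun hx => (annSeries_subgroup n B).2.2 _ hx

theorem lcs_le_annSeriesSub (c : ℕ) (h : annSeries B c = Set.univ) :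
    ∀ i, i ≤ c → (⊤ : Subgroup (Multiplicative B)).lowerCentralSeries i ≤ annSeriesSub B (c - i) := by
  intro i
  induction i with
  | zero =>
    intro _
    intro u _
    show Multiplicative.toAdd u ∈ annSeries B (c - 0)
    rw [Nat.sub_zero, h]
    trivial
  | succ i ih =>
    intro hic
    show ⁅(⊤ : Subgroup (Multiplicative B)).lowerCentralSeries i, ⊤⁆ ≤ _
    rw [Subgroup.commutator_le]
    intro u hu g _
    have hxu : Multiplicative.toAdd u ∈ annSeries B (c - i) := ih (le_of_lt hic) hu
    have he : c - i = (c - (i + 1)) + 1 := by omega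
    rw [he] at hxu
    set xx := Multiplicative.toAdd u with hxx
    set aa := Multiplicative.toAdd g with haa
    have hcomm : Multiplicative.toAdd ⁅u, g⁆ = (xx + aa) - (aa + xx) := by
      show xx + aa + -xx + -aa = (xx + aa) - (aa + xx)
      rw [sub_eq_add_neg, neg_add_rev, ← add_assoc]
    show Multiplicative.toAdd ⁅u, g⁆ ∈ annSeries B (c - (i + 1))
    rw [hcomm]
    exact ((mem_annSeries_succ_iff xx (c - (i + 1))).mp hxu aa).2.2

theorem lcs_bot_of_annSeries (c : ℕ) (h : annSeries B c = Set.univ) :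
    (⊤ : Subgroup (Multiplicative B)).lowerCentralSeries c = ⊥ := by
  rw [eq_bot_iff]
  intro u hu
  have := lcs_le_annSeriesSub c h c le_rfl hu
  rw [Nat.sub_self] at this
  have h0 : Multiplicative.toAdd u = 0 := this
  rw [Subgroup.mem_bot]
  have := congrArg Multiplicative.ofAdd h0
  simpa using this


end SBser

section SBmainthm



variable {B : Type u} [SkewBrace B]

theorem pow_eq_list_sum (x : B) (K : ℕ) :
    x ^ K = ((List.range K).map (fun i => lam (x ^ i) x)).sum := by
  induction K with
  | zero => rw [pow_zero, List.range_zero, List.map_nil, List.sum_nil, one_eq_zero]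
  | succ K ih =>
    rw [pow_succ, mul_eq_add_lam, List.range_succ, List.map_append, List.sum_append,
      List.map_singleton, List.sum_singleton, ih]

theorem annSet.pow_eq_nsmul {z : B} (hz : z ∈ annSet B) (j : ℕ) : z ^ j = j • z := by
  induction j with
  | zero => rw [pow_zero, zero_nsmul, one_eq_zero]
  | succ j ih => rw [pow_succ, ih, annSet.mul_eq_add' hz, succ_nsmul]

theorem ofAdd_list_sum (l : List B) :
    Multiplicative.ofAdd l.sum = (l.map (fun b => Multiplicative.ofAdd b)).prod := by
  induction l with
  | nil => rfl
  | cons a t ih => rw [List.sum_cons, List.map_cons, List.prod_cons, ofAdd_add, ih]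

theorem quot_one_eq_zero : (1 : AnnQuot B) = 0 := by
  rw [quot_one_def, one_eq_zero, QuotientAddGroup.mk_zero]

theorem main_iff : ∀ (n : ℕ) (B : Type u) [SkewBrace B], annSeries B n = Set.univ →
    ∀ x : B, (IsOfFinAddOrder x ↔ IsOfFinOrder x) := by
  intro n
  induction n with
  | zero =>
    intro B _ h x
    have hx : x = 0 := by
      have : x ∈ annSeries B 0 := by rw [h]; trivial
      exact this
    subst hx
    constructor
    · intro _
      rw [← one_eq_zero]
      exact IsOfFinOrder.one
    · intro _
      exact IsOfFinAddOrder.zero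
  | succ n ih =>
    intro B _ h x
    have hQ : annSeries (AnnQuot B) n = Set.univ := by
      rw [Set.eq_univ_iff_forall]
      intro q
      obtain ⟨a, rfl⟩ := quot_mk_surjective q
      rw [← quot_annSeries]
      rw [h]
      trivial
    have IHQ := ih (AnnQuot B) hQ
    have hlcs := lcs_bot_of_annSeries (n + 1) h
    constructor
    · -- additive torsion implies multiplicative torsion
      intro hx
      obtain ⟨m, hm, hmx⟩ := isOfFinAddOrder_iff_nsmul_eq_zero.mp hx
      have hmkfin : IsOfFinAddOrder (QuotientAddGroup.mk x : AnnQuot B) :=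
        isOfFinAddOrder_iff_nsmul_eq_zero.mpr
          ⟨m, hm, by rw [← quot_mk_nsmul, hmx, QuotientAddGroup.mk_zero]⟩
      obtain ⟨K, hK, hKx⟩ := isOfFinOrder_iff_pow_eq_one.mp ((IHQ _).mp hmkfin)
      have hz : x ^ K ∈ annSet B := by
        rw [← quot_mk_eq_zero_iff, quot_mk_pow, hKx, quot_one_eq_zero]
      have hfin2 : IsOfFinOrder (Multiplicative.ofAdd (x ^ K)) := by
        apply SBaux.cor1 hlcs hm
          (Set.range (fun i : ℕ => Multiplicative.ofAdd (lam (x ^ i) x)))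
        · rintro t ⟨i, rfl⟩
          rw [← ofAdd_nsmul, ← lam_nsmul, hmx, lam_zero, ofAdd_zero]
        · rw [pow_eq_list_sum x K, ofAdd_list_sum, List.map_map]
          apply Subgroup.list_prod_mem
          intro t ht
          rw [List.mem_map] at ht
          obtain ⟨i, _, rfl⟩ := ht
          exact Subgroup.subset_closure ⟨i, rfl⟩
      have hzfin : IsOfFinAddOrder (x ^ K) := isOfFinOrder_ofAdd_iff.mp hfin2
      obtain ⟨m', hm', hm'z⟩ := isOfFinAddOrder_iff_nsmul_eq_zero.mp hzfin
      refine isOfFinOrder_iff_pow_eq_one.mpr ⟨K * m', Nat.mul_pos hK hm', ?_⟩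
      rw [pow_mul, annSet.pow_eq_nsmul hz m', hm'z, one_eq_zero]
    · -- multiplicative torsion implies additive torsion
      intro hx
      obtain ⟨k, hk, hkx⟩ := isOfFinOrder_iff_pow_eq_one.mp hx
      have hmkfin : IsOfFinOrder (QuotientAddGroup.mk x : AnnQuot B) :=
        isOfFinOrder_iff_pow_eq_one.mpr
          ⟨k, hk, by rw [← quot_mk_pow, hkx, ← quot_one_def]⟩
      obtain ⟨M, hM, hMx⟩ := isOfFinAddOrder_iff_nsmul_eq_zero.mp ((IHQ _).mpr hmkfin)
      have hw : M • x ∈ annSet B := by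
        rw [← quot_mk_eq_zero_iff, quot_mk_nsmul, hMx]
      have hwfin : IsOfFinOrder (Multiplicative.ofAdd (M • x)) := by
        apply SBaux.cor2 hlcs hM
          (Set.range (fun i : ℕ => Multiplicative.ofAdd (lam (x ^ i) x)))
          (Multiplicative.ofAdd (M • x))
          (by
            rintro t ⟨i, rfl⟩
            rw [← ofAdd_nsmul, ← lam_nsmul, annSet.lam_fix hw])
          (by
            intro g
            show Multiplicative.ofAdd (M • x) * g = g * Multiplicative.ofAdd (M • x)
            rw [← ofAdd_toAdd g, ← ofAdd_add, ← ofAdd_add, annSet.comm hw])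
          ((List.range k).map (fun i => Multiplicative.ofAdd (lam (x ^ i) x)))
          (by
            intro a ha
            rw [List.mem_map] at ha
            obtain ⟨i, _, rfl⟩ := ha
            exact ⟨i, rfl⟩)
          (by
            apply List.ne_nil_of_length_pos
            rw [List.length_map, List.length_range]
            exact hk)
          (by
            have : ((List.range k).map (fun i => Multiplicative.ofAdd (lam (x ^ i) x)))
                = ((List.range k).map (fun i => lam (x ^ i) x)).map
                    (fun b => Multiplicative.ofAdd b) := by
              rw [List.map_map]
              rfl
            rw [this, ← ofAdd_list_sum, ← pow_eq_list_sum, hkx, one_eq_zero, ofAdd_zero])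
      have hwadd : IsOfFinAddOrder (M • x) := isOfFinOrder_ofAdd_iff.mp hwfin
      obtain ⟨j, hj, hjw⟩ := isOfFinAddOrder_iff_nsmul_eq_zero.mp hwadd
      refine isOfFinAddOrder_iff_nsmul_eq_zero.mpr ⟨j * M, Nat.mul_pos hj hM, ?_⟩
      rw [mul_comm, mul_nsmul]
      exact hjw


end SBmainthm

/-- Proposition 4.2(1): in an annihilator nilpotent skew brace, the elements of
finite additive order are exactly the elements of finite multiplicative
order. -/
theorem stmt11 {A : Type*} [SkewBrace A] (hann : AnnNilpotent A) :
    {x : A | IsOfFinAddOrder x} = {x : A | IsOfFinOrder x} := by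
  obtain ⟨n, hn⟩ := hann
  ext x
  exact main_iff n A hn x

end SkewBrace
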